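/- Every connected graph G with p vertices and q edges (p ≥ 2) can be split into a tree with q + 1 vertices. Formally, there exists a tree H with q + 1 vertices and a surjective map φ : V(H) → V(G) such that the map e ↦ φ(e) induced on edges gives a bijection from E(H) to E(G) (i.e., the multiset {φ(x)φ(y) : xy ∈ E(H)} equals E(G) with each edge appearing exactly once). -/

import Mathlib

open Function Set SimpleGraph

universe u

section Aux

variable {V : Type u}

private lemma reach_of_walk {G : SimpleGraph V} {u v : V}
    (hr : (G \ SimpleGraph.fromEdgeSet {s(u, v)}).Reachable u v) :
    ∀ {a b : V}, G.Walk a b → (G \ SimpleGraph.fromEdgeSet {s(u, v)}).Reachable a b := by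
  intro a b p
  induction p with
  | nil => exact Reachable.refl _
  | @cons x y z h p ih =>
    refine Reachable.trans ?_ ih
    by_cases he : s(x, y) = s(u, v)
    · rw [Sym2.eq_iff] at he
      rcases he with ⟨rfl, rfl⟩ | ⟨rfl, rfl⟩
      · exact hr
      · exact hr.symm
    · refine SimpleGraph.Adj.reachable ?_
      rw [SimpleGraph.sdiff_adj, SimpleGraph.fromEdgeSet_adj]
      exact ⟨h, fun hc => he (by simpa using hc.1)⟩

private lemma del_connected {G : SimpleGraph V} {u v : V} (hc : G.Connected)
    (hr : (G \ SimpleGraph.fromEdgeSet {s(u, v)}).Reachable u v) :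
    (G \ SimpleGraph.fromEdgeSet {s(u, v)}).Connected := by
  rw [connected_iff] at hc ⊢
  exact ⟨fun a b => (hc.1 a b).elim fun p => reach_of_walk hr p, hc.2⟩

private lemma exists_nonbridge {G : SimpleGraph V} (hna : ¬ G.IsAcyclic) :
    ∃ u v, G.Adj u v ∧ (G \ SimpleGraph.fromEdgeSet {s(u, v)}).Reachable u v := by
  rw [isAcyclic_iff_forall_adj_isBridge] at hna
  push_neg at hna
  obtain ⟨u, v, hadj, hb⟩ := hna
  rw [isBridge_iff] at hb
  push_neg at hb
  exact ⟨u, v, hadj, hb⟩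

private lemma edgeSet_del (G : SimpleGraph V) (u v : V) :
    (G \ SimpleGraph.fromEdgeSet {s(u, v)}).edgeSet = G.edgeSet \ {s(u, v)} := by
  rw [edgeSet_sdiff, edgeSet_fromEdgeSet, edgeSet_sdiff_sdiff_isDiag]

private lemma my_edgeSet_map {W : Type*} (f : V ↪ W) (G : SimpleGraph V) :
    (G.map f).edgeSet = Sym2.map ⇑f '' G.edgeSet := by
  ext x
  induction x using Sym2.ind with
  | _ a b =>
    rw [mem_edgeSet, SimpleGraph.map_adj]
    constructor
    · rintro ⟨a', b', h, rfl, rfl⟩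
      exact ⟨s(a', b'), h, rfl⟩
    · rintro ⟨e', he', hm⟩
      induction e' using Sym2.ind with
      | _ a' b' =>
        rw [Sym2.map_pair_eq, Sym2.eq_iff] at hm
        rcases hm with ⟨rfl, rfl⟩ | ⟨rfl, rfl⟩
        · exact ⟨a', b', he', rfl, rfl⟩
        · exact ⟨b', a', (SimpleGraph.Adj.symm he'), rfl, rfl⟩

private lemma card_le_of_connected : ∀ (n : ℕ) {V : Type u} [Fintype V] (G : SimpleGraph V),
    G.Connected → G.edgeSet.ncard = n → Fintype.card V ≤ n + 1 := by
  intro n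
  induction n using Nat.strong_induction_on with
  | _ n ih =>
    intro V _ G hc hn
    by_cases hac : G.IsAcyclic
    · haveI : Fintype G.edgeSet := Fintype.ofFinite _
      have ht := SimpleGraph.IsTree.card_edgeFinset (⟨hc, hac⟩ : G.IsTree)
      have h2 : G.edgeSet.ncard = G.edgeFinset.card := Set.ncard_eq_toFinset_card' _
      omega
    · obtain ⟨u, v, hadj, hr⟩ := exists_nonbridge hac
      have hc' := del_connected hc hr
      have hmem : s(u, v) ∈ G.edgeSet := hadj
      have hfin : G.edgeSet.Finite := Set.toFinite _
      have hn' : (G \ SimpleGraph.fromEdgeSet {s(u, v)}).edgeSet.ncard = n - 1 := by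
        rw [edgeSet_del, Set.ncard_diff_singleton_of_mem hmem, hn]
      have hpos : 0 < n := by
        rw [← hn]
        exact (Set.ncard_pos hfin).mpr ⟨_, hmem⟩
      have hb := ih (n - 1) (by omega) _ hc' hn'
      omega

private lemma acyclic_of_card {V : Type u} [Fintype V] (G : SimpleGraph V)
    (hc : G.Connected) (hcard : G.edgeSet.ncard + 1 = Fintype.card V) : G.IsAcyclic := by
  by_contra hna
  obtain ⟨u, v, hadj, hr⟩ := exists_nonbridge hna
  have hc' := del_connected hc hr
  have hmem : s(u, v) ∈ G.edgeSet := hadj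
  have hfin : G.edgeSet.Finite := Set.toFinite _
  have hn' : (G \ SimpleGraph.fromEdgeSet {s(u, v)}).edgeSet.ncard = G.edgeSet.ncard - 1 := by
    rw [edgeSet_del, Set.ncard_diff_singleton_of_mem hmem]
  have hpos : 0 < G.edgeSet.ncard := (Set.ncard_pos hfin).mpr ⟨_, hmem⟩
  have hb := card_le_of_connected _ _ hc' hn'
  omega

private lemma key : ∀ (n : ℕ) {V : Type u} [Fintype V] (G : SimpleGraph V),
    G.Connected → 2 ≤ Fintype.card V → G.edgeSet.ncard = n →
    ∃ H : SimpleGraph (Fin (n + 1)), H.Connected ∧ H.IsAcyclic ∧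
      ∃ φ : Fin (n + 1) → V, Function.Surjective φ ∧
        Set.BijOn (Sym2.map φ) H.edgeSet G.edgeSet := by
  intro n
  induction n with
  | zero =>
    intro V _ G hc hp hn
    exfalso
    obtain ⟨a, b, hab⟩ := Fintype.exists_pair_of_one_lt_card (α := V) (by omega)
    obtain ⟨p⟩ := hc.preconnected a b
    cases p with
    | nil => exact hab rfl
    | @cons _ c _ h p =>
      have hmem : s(a, c) ∈ G.edgeSet := h
      have : 0 < G.edgeSet.ncard := (Set.ncard_pos (Set.toFinite _)).mpr ⟨_, hmem⟩
      omega
  | succ n ih =>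
    intro V _ G hc hp hn
    by_cases hac : G.IsAcyclic
    · -- G is a tree
      haveI : Fintype G.edgeSet := Fintype.ofFinite _
      have ht := SimpleGraph.IsTree.card_edgeFinset (⟨hc, hac⟩ : G.IsTree)
      have h2 : G.edgeSet.ncard = G.edgeFinset.card := Set.ncard_eq_toFinset_card' _
      have hV : Fintype.card V = n + 2 := by omega
      let e : Fin (n + 2) ≃ V := (Fintype.equivFinOfCardEq hV).symm
      let H : SimpleGraph (Fin (n + 2)) := G.comap ⇑e
      let iso : H ≃g G := { toEquiv := e, map_rel_iff' := Iff.rfl }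
      refine ⟨H, iso.connected_iff.mpr hc, ?_, ⇑e, e.surjective, ?_, ?_, ?_⟩
      · intro a c hcyc
        exact hac (c.map iso.toHom)
          ((SimpleGraph.Walk.map_isCycle_iff_of_injective (f := iso.toHom) e.injective).mpr hcyc)
      · -- MapsTo
        intro x hx
        induction x using Sym2.ind with
        | _ a b =>
          have hx' : G.Adj (e a) (e b) := hx
          simpa using hx'
      · -- InjOn
        exact (Sym2.map.injective e.injective).injOn
      · -- SurjOn
        intro y hy
        refine ⟨Sym2.map ⇑e.symm y, ?_, ?_⟩
        · induction y using Sym2.ind with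
          | _ a b =>
            rw [Sym2.map_pair_eq, SimpleGraph.mem_edgeSet]
            show G.Adj (e (e.symm a)) (e (e.symm b))
            simpa using hy
        · rw [Sym2.map_map]
          simp
    · -- G has a non-bridge edge
      obtain ⟨u, v, hadj, hr⟩ := exists_nonbridge hac
      set G' : SimpleGraph V := G \ SimpleGraph.fromEdgeSet {s(u, v)} with hG'def
      have hc' : G'.Connected := del_connected hc hr
      have hmem : s(u, v) ∈ G.edgeSet := hadj
      have hfin : G.edgeSet.Finite := Set.toFinite _
      have hn' : G'.edgeSet.ncard = n := by
        rw [hG'def, edgeSet_del, Set.ncard_diff_singleton_of_mem hmem, hn]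
        omega
      obtain ⟨H', hH'c, hH'a, φ', hφ's, hbij⟩ := ih G' hc' hp hn'
      obtain ⟨j, hj⟩ := hφ's u
      let emb : Fin (n + 1) ↪ Fin (n + 2) := ⟨Fin.castSucc, Fin.castSucc_injective _⟩
      let L : Fin (n + 2) := Fin.last (n + 1)
      let H : SimpleGraph (Fin (n + 2)) :=
        H'.map emb ⊔ SimpleGraph.fromEdgeSet {s(emb j, L)}
      let φ : Fin (n + 2) → V := Fin.snoc φ' v
      have hφc : ∀ i : Fin (n + 1), φ (emb i) = φ' i := by
        intro i
        simp [φ, emb, Fin.snoc_castSucc]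
      have hφL : φ L = v := by
        simp [φ, L, Fin.snoc_last]
      have hne : emb j ≠ L := (Fin.castSucc_lt_last j).ne
      have hLnot : ∀ e' : Sym2 (Fin (n + 1)), Sym2.map ⇑emb e' ≠ s(emb j, L) := by
        intro e' h
        have hLm : L ∈ Sym2.map ⇑emb e' := by rw [h]; exact Sym2.mem_mk_right _ _
        rw [Sym2.mem_map] at hLm
        obtain ⟨a, _, ha⟩ := hLm
        exact (Fin.castSucc_lt_last a).ne ha
      have hEdge : H.edgeSet = (Sym2.map ⇑emb '' H'.edgeSet) ∪ {s(emb j, L)} := by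
        rw [edgeSet_sup, edgeSet_fromEdgeSet, my_edgeSet_map]
        congr 1
        ext x
        simp only [Set.mem_diff, Set.mem_singleton_iff, Set.mem_setOf_eq,
          and_iff_left_iff_imp]
        rintro rfl
        exact fun hd => hne (Sym2.mk_isDiag_iff.mp hd)
      let hom : H' →g H :=
        ⟨Fin.castSucc, fun {a b} h => (SimpleGraph.sup_adj _ _ _ _).mpr
          (Or.inl ((SimpleGraph.map_adj emb H' _ _).mpr ⟨a, b, h, rfl, rfl⟩))⟩
      have hadjL : H.Adj L (emb j) := by
        refine (SimpleGraph.sup_adj _ _ _ _).mpr (Or.inr ?_)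
        rw [SimpleGraph.fromEdgeSet_adj]
        exact ⟨by rw [Set.mem_singleton_iff, Sym2.eq_swap], hne.symm⟩
      have hreach : ∀ a : Fin (n + 2), H.Reachable a (emb j) := by
        intro a
        induction a using Fin.lastCases with
        | last => exact hadjL.reachable
        | cast i => exact SimpleGraph.Reachable.map hom (hH'c.preconnected i j)
      have hHc : H.Connected := by
        rw [connected_iff]
        exact ⟨fun a b => (hreach a).trans (hreach b).symm, inferInstance⟩
      have hmap' : ∀ e' : Sym2 (Fin (n + 1)), Sym2.map φ (Sym2.map ⇑emb e') = Sym2.map φ' e' := by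
        intro e'
        rw [Sym2.map_map]
        exact congrFun (congrArg Sym2.map (funext hφc)) e'
      have hG'ne : s(u, v) ∉ G'.edgeSet := by
        rw [hG'def, edgeSet_del]
        exact fun h => h.2 rfl
      have hGins : G.edgeSet = insert s(u, v) G'.edgeSet := by
        rw [hG'def, edgeSet_del, Set.insert_diff_singleton, Set.insert_eq_self.mpr hmem]
      have hspecial : Sym2.map φ s(emb j, L) = s(u, v) := by
        rw [Sym2.map_pair_eq, hφc, hj, hφL]
      have hcount : H.edgeSet.ncard = n + 1 := by
        rw [hEdge, Set.union_singleton,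
          Set.ncard_insert_of_notMem (fun h => by
            obtain ⟨e', _, he⟩ := h
            exact hLnot e' he) (Set.toFinite _)]
        rw [Set.ncard_image_of_injective _ (Sym2.map.injective emb.injective)]
        have himg := hbij.image_eq
        have := Set.ncard_image_of_injOn hbij.injOn
        rw [himg, hn'] at this
        omega
      have hHa : H.IsAcyclic := by
        refine acyclic_of_card H hHc ?_
        rw [hcount, Fintype.card_fin]
      refine ⟨H, hHc, hHa, φ, ?_, ?_, ?_, ?_⟩
      · intro x
        obtain ⟨i, hi⟩ := hφ's x
        exact ⟨emb i, by rw [hφc]; exact hi⟩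
      · -- MapsTo
        intro x hx
        rw [hEdge] at hx
        rcases hx with ⟨e', he', rfl⟩ | hx
        · rw [hmap']
          rw [hGins]
          exact Set.mem_insert_of_mem _ (hbij.mapsTo he')
        · rw [Set.mem_singleton_iff] at hx
          subst hx
          rw [hspecial]
          exact hmem
      · -- InjOn
        intro x hx y hy hxy
        rw [hEdge] at hx hy
        rcases hx with ⟨e1, he1, rfl⟩ | hx <;> rcases hy with ⟨e2, he2, rfl⟩ | hy
        · rw [hmap', hmap'] at hxy
          rw [hbij.injOn he1 he2 hxy]
        · exfalso
          rw [Set.mem_singleton_iff] at hy; subst hy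
          rw [hmap', hspecial] at hxy
          exact hG'ne (hxy ▸ hbij.mapsTo he1)
        · exfalso
          rw [Set.mem_singleton_iff] at hx; subst hx
          rw [hmap', hspecial] at hxy
          exact hG'ne (hxy ▸ hbij.mapsTo he2)
        · rw [Set.mem_singleton_iff] at hx hy
          rw [hx, hy]
      · -- SurjOn
        intro y hy
        rw [hGins] at hy
        rcases Set.mem_insert_iff.mp hy with rfl | hy'
        · exact ⟨s(emb j, L), by rw [hEdge]; exact Or.inr rfl, hspecial⟩
        · obtain ⟨e', he', heq⟩ := hbij.surjOn hy'
          exact ⟨Sym2.map ⇑emb e', by rw [hEdge]; exact Or.inl ⟨e', he', rfl⟩,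
            by rw [hmap']; exact heq⟩

end Aux

/-- Every connected graph `G` with `p ≥ 2` vertices and `q` edges can be split into a
tree `H` with `q + 1` vertices: there is a surjective vertex map `φ : V(H) → V(G)` whose
induced map on edges is a bijection from `E(H)` onto `E(G)`. -/
theorem connected_graph_splits_into_tree {V : Type*} [Fintype V] [DecidableEq V]
    (G : SimpleGraph V) [DecidableRel G.Adj] (hconn : G.Connected)
    (hp : 2 ≤ Fintype.card V) :
    ∃ H : SimpleGraph (Fin (G.edgeFinset.card + 1)),
      H.Connected ∧ H.IsAcyclic ∧
      ∃ φ : Fin (G.edgeFinset.card + 1) → V, Function.Surjective φ ∧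
        Set.BijOn (Sym2.map φ) H.edgeSet G.edgeSet :=
  key G.edgeFinset.card G hconn hp (Set.ncard_eq_toFinset_card' _)
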